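/- Let n ≥ 1 and let σ ∈ ℂ with Re σ > −n. Then the function x ↦ K̃_{−σ/2}(|x|) is absolutely integrable on ℝ^n, and there exists a constant c ∈ ℂ with c ≠ 0, depending only on n and σ, such that for all ξ ∈ ℝ^n: ∫_{ℝ^n} e^{−i⟨ξ,x⟩} K̃_{−σ/2}(|x|) dx = c·(1+|ξ|²)^{−(σ+n)/2}. -/

import Mathlib

open MeasureTheory

noncomputable section

/-- The K-Bessel function `K_α(r) = ∫₀^∞ e^{−r cosh t} cosh(αt) dt`. -/
def KBessel (α : ℂ) (r : ℝ) : ℂ :=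
  ∫ t in Set.Ioi (0 : ℝ), (Real.exp (-r * Real.cosh t) : ℂ) * Complex.cosh (α * t)

/-- The renormalized K-Bessel function `K̃_α(r) = (r/2)^{−α} K_α(r)`. -/
def Ktilde (α : ℂ) (r : ℝ) : ℂ := ((r : ℂ) / 2) ^ (-α) * KBessel α r

open Set


lemma H1 (c : ℝ) {ε : ℝ} (hε : 0 < ε) :
    Integrable (fun t : ℝ => Real.exp (c * |t| - ε * t ^ 2)) := by
  refine Integrable.mono' ((integrable_exp_neg_mul_sq (show 0 < ε/2 by linarith)).const_mul
    (Real.exp (c^2/(2*ε)))) ?_ (Filter.Eventually.of_forall fun t => ?_)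
  · exact (Real.continuous_exp.comp (by continuity)).aestronglyMeasurable
  · rw [Real.norm_eq_abs, _root_.abs_of_nonneg (Real.exp_nonneg _), ← Real.exp_add]
    apply Real.exp_le_exp.2
    have h1 : (c*|t|) * (2*ε) ≤ ε^2*t^2 + c^2 := by
      nlinarith [sq_nonneg (ε*|t| - c), _root_.sq_abs t]
    have h2 := (le_div_iff₀ (show (0:ℝ) < 2*ε by linarith)).mpr h1
    have h3 : (ε^2*t^2 + c^2)/(2*ε) = ε/2*t^2 + c^2/(2*ε) := by field_simp
    rw [h3] at h2
    linarith

lemma H0 {x : ℝ} (hx : 0 ≤ x) : x ^ 2 / 4 ≤ Real.exp x := by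
  have h := Real.add_one_le_exp (x/2)
  have h2 : Real.exp x = Real.exp (x/2) * Real.exp (x/2) := by
    rw [← Real.exp_add]; ring_nf
  nlinarith [Real.exp_pos (x/2)]

lemma cosh_lb (t : ℝ) : t ^ 2 / 8 ≤ Real.cosh t := by
  have h1 : Real.exp |t| ≤ 2 * Real.cosh t := by
    rw [Real.cosh_eq]
    rcases abs_cases t with ⟨h, _⟩ | ⟨h, _⟩ <;> rw [h] <;>
      nlinarith [Real.exp_pos t, Real.exp_pos (-t)]
  have h2 := H0 (abs_nonneg t)
  rw [_root_.sq_abs] at h2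
  linarith

lemma H2 {r : ℝ} (hr : 0 < r) (c : ℝ) :
    Integrable (fun t : ℝ => Real.exp (c * t - r * Real.cosh t)) := by
  refine Integrable.mono' (H1 |c| (show 0 < r/8 by linarith))
    ((Real.continuous_exp.comp (by continuity)).aestronglyMeasurable)
    (Filter.Eventually.of_forall fun t => ?_)
  rw [Real.norm_eq_abs, _root_.abs_of_nonneg (Real.exp_nonneg _)]
  apply Real.exp_le_exp.2
  have hct : c * t ≤ |c| * |t| := (le_abs_self _).trans (abs_mul c t).le
  nlinarith [cosh_lb t]

lemma H3 {a b : ℝ} (ha : 0 < a) (hb : 0 < b) (c : ℝ) :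
    Integrable (fun s : ℝ => Real.exp (c * s - a * Real.exp s - b * Real.exp (-s))) := by
  set m := min a b with hm
  have hm0 : 0 < m := lt_min ha hb
  refine Integrable.mono' (H1 |c| (show 0 < m/8 by linarith))
    ((Real.continuous_exp.comp (by continuity)).aestronglyMeasurable)
    (Filter.Eventually.of_forall fun s => ?_)
  rw [Real.norm_eq_abs, _root_.abs_of_nonneg (Real.exp_nonneg _)]
  apply Real.exp_le_exp.2
  have hct : c * s ≤ |c| * |s| := (le_abs_self _).trans (abs_mul c s).le
  have key : m * Real.cosh s ≤ a * Real.exp s + b * Real.exp (-s) := by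
    rw [Real.cosh_eq]
    have h1 : m ≤ a := min_le_left a b
    have h2 : m ≤ b := min_le_right a b
    nlinarith [Real.exp_pos s, Real.exp_pos (-s)]
  nlinarith [cosh_lb s]


lemma exp_deriv_aux : ∀ x ∈ (univ : Set ℝ), HasDerivWithinAt Real.exp (Real.exp x) univ x :=
  fun x _ => (Real.hasDerivAt_exp x).hasDerivWithinAt

lemma exp_image_aux : Real.exp '' univ = Ioi 0 := by
  rw [image_univ, Real.range_exp]

variable {F : Type*} [NormedAddCommGroup F] [NormedSpace ℝ F]

/-- substitution t = e^s : integral version -/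
lemma subst_exp (g : ℝ → F) :
    ∫ t in Ioi (0:ℝ), g t = ∫ s : ℝ, Real.exp s • g (Real.exp s) := by
  rw [← exp_image_aux, integral_image_eq_integral_abs_deriv_smul MeasurableSet.univ
    exp_deriv_aux Real.exp_injective.injOn g]
  simp [_root_.abs_of_pos (Real.exp_pos _)]

lemma subst_exp_integrable (g : ℝ → F) :
    IntegrableOn g (Ioi (0:ℝ)) ↔ Integrable (fun s => Real.exp s • g (Real.exp s)) := by
  rw [← exp_image_aux, integrableOn_image_iff_integrableOn_abs_deriv_smul MeasurableSet.univ
    exp_deriv_aux Real.exp_injective.injOn g]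
  simp only [_root_.abs_of_pos (Real.exp_pos _)]
  rw [integrableOn_univ]

/-- cpow of cexp of real: cexp(x)^z = cexp(z x) -/
lemma cexp_real_cpow (x : ℝ) (z : ℂ) :
    Complex.exp ((x : ℝ) : ℂ) ^ z = Complex.exp (z * x) := by
  rw [ Complex.cpow_def_of_ne_zero (Complex.exp_ne_zero _),
    Complex.log_exp (by simpa using Real.pi_pos) (by simpa using Real.pi_nonneg), mul_comm]


lemma H4 {a c : ℝ} (ha : 0 < a) (hc : 0 < c) :
    Integrable (fun s : ℝ => Real.exp (c * s - a * Real.exp s)) := by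
  have base := Real.GammaIntegral_convergent hc
  have hcomp : IntegrableOn (fun t : ℝ => Real.exp (-(a*t)) * (a*t) ^ (c - 1)) (Ioi 0) := by
    have h := (integrableOn_Ioi_comp_mul_left_iff
      (fun x : ℝ => Real.exp (-x) * x ^ (c - 1)) 0 ha).mpr (by simpa using base)
    simpa using h
  have hg : IntegrableOn
      (fun t : ℝ => a ^ (1-c) * (Real.exp (-(a*t)) * (a*t) ^ (c - 1))) (Ioi 0) :=
    hcomp.const_mul _
  have hg2 : IntegrableOn (fun t : ℝ => Real.exp (-(a*t)) * t ^ (c - 1)) (Ioi 0) := by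
    refine hg.congr_fun (fun t ht => ?_) measurableSet_Ioi
    beta_reduce
    rw [Real.mul_rpow ha.le (le_of_lt ht), ← mul_assoc, mul_comm (a ^ (1-c)) (Real.exp _),
      mul_assoc, ← mul_assoc (a ^ (1-c)), ← Real.rpow_add ha]
    norm_num
  have := (subst_exp_integrable (F := ℝ) _).mp hg2
  refine this.congr (Filter.Eventually.of_forall fun s => ?_)
  simp only [smul_eq_mul]
  rw [← Real.exp_mul, ← Real.exp_add, ← Real.exp_add]
  congr 1
  ring

lemma M3 {c : ℝ} (hc : 0 < c) {w : ℂ} (hw : 0 < w.re) :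
    ∫ s : ℝ, (Real.exp (-(c * Real.exp s)) : ℂ) * Complex.exp (w * s)
      = (c : ℂ) ^ (-w) * Complex.Gamma w := by
  have key := Complex.integral_cpow_mul_exp_neg_mul_Ioi hw hc
  rw [subst_exp] at key
  have h2 : (1/(c:ℂ)) ^ w = (c:ℂ) ^ (-w) := by
    rw [one_div, Complex.inv_cpow _ _
      (by rw [Complex.arg_ofReal_of_nonneg hc.le]; exact Real.pi_ne_zero.symm),
      ← Complex.cpow_neg]
  rw [h2] at key
  rw [← key]
  apply integral_congr_ae
  apply Filter.Eventually.of_forall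
  intro s
  simp only [Complex.real_smul, Complex.ofReal_exp, Complex.ofReal_neg, Complex.ofReal_mul,
    cexp_real_cpow, ← Complex.exp_add]
  congr 1
  ring



lemma fint {r : ℝ} (hr : 0 < r) (α : ℂ) :
    Integrable (fun t : ℝ => (Real.exp (-r * Real.cosh t) : ℂ) * Complex.exp (-α * t)) := by
  refine Integrable.mono' (H2 hr (-α.re)) ?_ (Filter.Eventually.of_forall fun t => ?_)
  · apply Continuous.aestronglyMeasurable
    continuity
  · rw [norm_mul, Complex.norm_exp, Complex.norm_real, Real.norm_eq_abs,
      _root_.abs_of_nonneg (Real.exp_nonneg _), ← Real.exp_add]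
    apply Real.exp_le_exp.2
    have : (-α * ↑t).re = -α.re * t := by simp
    rw [this]
    ring_nf
    exact le_refl _

/-- Step (a) -/
lemma KBessel_eq_lineIntegral {r : ℝ} (hr : 0 < r) (α : ℂ) :
    KBessel α r = (1/2) * ∫ t : ℝ, (Real.exp (-r * Real.cosh t) : ℂ) * Complex.exp (-α * t) := by
  set f : ℝ → ℂ := fun t => (Real.exp (-r * Real.cosh t) : ℂ) * Complex.exp (-α * t) with hf
  have hint := fint hr α
  have split : (∫ t in Iic (0:ℝ), f t) + (∫ t in Ioi (0:ℝ), f t) = ∫ t : ℝ, f t :=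
    intervalIntegral.integral_Iic_add_Ioi hint.integrableOn hint.integrableOn
  have hrefl : (∫ t in Iic (0:ℝ), f t) = ∫ t in Ioi (0:ℝ), f (-t) := by
    rw [integral_comp_neg_Ioi, neg_zero]
  have hneg : Integrable (fun t : ℝ => f (-t)) := by
    have h := fint hr (-α)
    simp only [neg_neg] at h
    refine h.congr (Filter.Eventually.of_forall fun t => ?_)
    simp only [hf, Real.cosh_neg]
    congr 2
    push_cast
    ring
  have comb : (∫ t in Ioi (0:ℝ), f (-t)) + (∫ t in Ioi (0:ℝ), f t)
      = ∫ t in Ioi (0:ℝ), (f (-t) + f t) :=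
    (integral_add hneg.integrableOn hint.integrableOn).symm
  have key : ∀ t : ℝ, f (-t) + f t
      = 2 * ((Real.exp (-r * Real.cosh t) : ℂ) * Complex.cosh (α * t)) := by
    intro t
    simp only [hf, Real.cosh_neg]
    push_cast
    rw [neg_mul_neg, mul_comm (2:ℂ) _, mul_assoc, mul_comm (Complex.cosh (α * ↑t)) (2:ℂ),
      Complex.two_cosh]
    ring
  rw [KBessel, ← split, hrefl, comb,
    integral_congr_ae (Filter.Eventually.of_forall fun t => key t), integral_const_mul]
  push_cast
  ring


lemma cpow_pos_real {x : ℝ} (hx : 0 < x) (z : ℂ) :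
    ((x : ℝ) : ℂ) ^ z = Complex.exp (z * Real.log x) := by
  rw [Complex.cpow_def_of_ne_zero (by exact_mod_cast hx.ne'), ← Complex.ofReal_log hx.le,
    mul_comm]

/-- The key integral representation of the renormalized K-Bessel function. -/
lemma Ktilde_repr {r : ℝ} (hr : 0 < r) (α : ℂ) :
    Ktilde α r = (1/2) * ∫ s : ℝ,
      (Real.exp (-(Real.exp s) - r^2/4 * Real.exp (-s)) : ℂ) * Complex.exp (-α * s) := by
  have hr2 : 0 < 2/r := by positivity
  set L := Real.log (2/r) with hL
  have hexpL : Real.exp L = 2/r := Real.exp_log hr2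
  have hexpnL : Real.exp (-L) = r/2 := by
    rw [Real.exp_neg, hexpL]
    field_simp
  have step1 : ∀ s : ℝ,
      (Real.exp (-r * Real.cosh (s + L)) : ℂ) * Complex.exp (-α * (s + L))
      = Complex.exp (-α * L) *
        ((Real.exp (-(Real.exp s) - r^2/4 * Real.exp (-s)) : ℂ) * Complex.exp (-α * s)) := by
    intro s
    have hcosh : -r * Real.cosh (s + L) = -(Real.exp s) - r^2/4 * Real.exp (-s) := by
      rw [Real.cosh_eq, Real.exp_add, neg_add, Real.exp_add, hexpL, hexpnL]
      field_simp
      ring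
    rw [hcosh]
    rw [show -α * ((s : ℂ) + (L : ℂ)) = -α * s + -α * L by ring, Complex.exp_add]
    ring
  have shift := integral_add_right_eq_self (μ := volume)
    (fun t : ℝ => (Real.exp (-r * Real.cosh t) : ℂ) * Complex.exp (-α * t)) L
  rw [Ktilde, KBessel_eq_lineIntegral hr, ← shift]
  have : ∫ s : ℝ, (Real.exp (-r * Real.cosh (s + L)) : ℂ) * Complex.exp (-α * ((s + L : ℝ) : ℂ))
      = Complex.exp (-α * L) *
        ∫ s : ℝ, (Real.exp (-(Real.exp s) - r^2/4 * Real.exp (-s)) : ℂ) * Complex.exp (-α * s) := by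
    rw [← integral_const_mul]
    refine integral_congr_ae (Filter.Eventually.of_forall fun s => ?_)
    simp only [Complex.ofReal_add]
    exact step1 s
  rw [this]
  have hbase : ((r : ℂ)/2) = (((r/2 : ℝ)) : ℂ) := by push_cast; ring
  have hpow : ((r : ℂ)/2) ^ (-α) = Complex.exp (-α * Real.log (r/2)) := by
    rw [hbase, cpow_pos_real (by positivity)]
  have hLog : (L : ℝ) = - Real.log (r/2) := by
    rw [hL, show 2/r = (r/2)⁻¹ by field_simp, Real.log_inv]
  have hcancel : ((r : ℂ)/2) ^ (-α) * Complex.exp (-α * L) = 1 := by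
    rw [hpow, hLog, ← Complex.exp_add]
    push_cast
    rw [show -α * (Real.log (r/2) : ℂ) + -α * (-(Real.log (r/2) : ℂ)) = 0 by ring,
      Complex.exp_zero]
  set Iv := ∫ s : ℝ, (Real.exp (-(Real.exp s) - r^2/4 * Real.exp (-s)) : ℂ) *
    Complex.exp (-α * s) with hIv
  calc ((r : ℂ)/2) ^ (-α) * (1/2 * (Complex.exp (-α * (L : ℂ)) * Iv))
      = (((r : ℂ)/2) ^ (-α) * Complex.exp (-α * (L : ℂ))) * (1/2 * Iv) := by ring
    _ = 1/2 * Iv := by rw [hcancel, one_mul]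


open Complex in
/-- for `Re σ > −n` the function `x ↦ K̃_{−σ/2}(|x|)` is integrable on `ℝⁿ` and its
Fourier transform is a nonzero multiple of `(1+|ξ|²)^{−(σ+n)/2}`. -/
theorem stmt12 (n : ℕ) (hn : 1 ≤ n) (σ : ℂ) (hσ : -(n : ℝ) < σ.re) :
    Integrable (fun x : EuclideanSpace ℝ (Fin n) => Ktilde (-σ / 2) ‖x‖) ∧
    ∃ c : ℂ, c ≠ 0 ∧ ∀ ξ : EuclideanSpace ℝ (Fin n),
      (∫ x : EuclideanSpace ℝ (Fin n),
          Complex.exp (-Complex.I * ((inner ℝ ξ x : ℝ) : ℂ)) * Ktilde (-σ / 2) ‖x‖) =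
        c * ((1 + ‖ξ‖ ^ 2 : ℝ) : ℂ) ^ (-(σ + (n : ℂ)) / 2) := by
  haveI : NeZero n := ⟨by omega⟩
  set V := EuclideanSpace ℝ (Fin n) with hV
  haveI : Nontrivial V := by
    refine ⟨EuclideanSpace.single ⟨0, by omega⟩ (1:ℝ), 0, fun h => ?_⟩
    have h2 := congrArg (fun v : V => v ⟨0, by omega⟩) h
    simp only [EuclideanSpace.single_apply, if_pos rfl] at h2
    exact one_ne_zero (h2.trans rfl)
  set f : V → ℝ → ℂ := fun x s =>
    (Real.exp (-(Real.exp s) - ‖x‖^2/4 * Real.exp (-s)) : ℂ) * Complex.exp (σ/2 * s) with hf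
  have hβ : 0 < σ.re/2 + (n:ℝ)/2 := by
    have : (0:ℝ) < σ.re + n := by linarith
    linarith
  have hwre : 0 < ((σ + (n:ℂ))/2).re := by
    rw [show (2:ℂ) = ((2:ℝ):ℂ) by norm_num, Complex.div_ofReal_re]
    simp only [Complex.add_re, Complex.natCast_re]
    linarith
  -- pointwise representation
  have hrep : ∀ x : V, x ≠ 0 → Ktilde (-σ/2) ‖x‖ = (1/2) * ∫ s : ℝ, f x s := by
    intro x hx
    rw [Ktilde_repr (norm_pos_iff.mpr hx) (-σ/2)]
    congr 1
    refine integral_congr_ae (Filter.Eventually.of_forall fun s => ?_)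
    simp only [hf]
    congr 2
    ring
  have hae : ∀ᵐ x : V, x ≠ 0 := by
    have h0 : volume ({0} : Set V) = 0 := measure_singleton 0
    rw [MeasureTheory.ae_iff]
    convert h0 using 2
    ext x
    simp
  -- norm of f
  have hre2 : ∀ s : ℝ, (σ/2 * (s:ℂ)).re = σ.re/2 * s := by
    intro s
    rw [mul_comm, Complex.re_ofReal_mul, show (2:ℂ) = ((2:ℝ):ℂ) by norm_num,
      Complex.div_ofReal_re]
    ring
  have hnorm : ∀ (x : V) (s : ℝ), ‖f x s‖
      = Real.exp (-(Real.exp s) - ‖x‖^2/4 * Real.exp (-s)) * Real.exp (σ.re/2 * s) := by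
    intro x s
    rw [hf]
    simp only [norm_mul, Complex.norm_real, Real.norm_eq_abs, Complex.norm_exp,
      _root_.abs_of_nonneg (Real.exp_nonneg _), hre2 s]
  -- continuity
  have hcont : Continuous (Function.uncurry f) := by
    apply Continuous.mul
    · apply Complex.continuous_ofReal.comp
      apply Real.continuous_exp.comp
      fun_prop
    · apply Complex.continuous_exp.comp
      fun_prop
  have hb' : ∀ s : ℝ, (0:ℝ) < Real.exp (-s)/4 := fun s => by positivity
  have hbre : ∀ s : ℝ, (0:ℝ) < ((Real.exp (-s)/4 : ℝ) : ℂ).re := fun s => by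
    rw [Complex.ofReal_re]; exact hb' s
  -- integrability in x for fixed s
  have hgauss_int : ∀ s : ℝ, Integrable (fun x : V => f x s) := by
    intro s
    have base := (GaussianFourier.integrable_cexp_neg_mul_sq_norm_add (V := V)
      (hbre s) 0 (0 : V)).const_mul ((Real.exp (-(Real.exp s)) : ℂ) * Complex.exp (σ/2 * s))
    refine base.congr (Filter.Eventually.of_forall fun x => ?_)
    simp only [hf, inner_zero_left, Complex.ofReal_zero, zero_mul, mul_zero, add_zero,
      Complex.ofReal_exp]
    rw [← Complex.exp_add, ← Complex.exp_add, ← Complex.exp_add]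
    congr 1
    push_cast
    ring
  -- integral of the norm in x, for fixed s
  have hfrank : Module.finrank ℝ V = n := finrank_euclideanSpace_fin
  have hnormint : ∀ s : ℝ, (∫ x : V, ‖f x s‖)
      = (4*Real.pi)^((n:ℝ)/2) * Real.exp ((σ.re/2 + (n:ℝ)/2) * s - Real.exp s) := by
    intro s
    have h1 : ∀ x : V, ‖f x s‖ = Real.exp (σ.re/2 * s - Real.exp s)
        * Real.exp (-(Real.exp (-s)/4) * ‖x‖^2) := by
      intro x
      rw [hnorm, ← Real.exp_add, ← Real.exp_add]
      congr 1
      ring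
    rw [integral_congr_ae (Filter.Eventually.of_forall h1), integral_const_mul,
      GaussianFourier.integral_rexp_neg_mul_sq_norm (hb' s)]
    have h2 : Real.pi / (Real.exp (-s)/4) = (4*Real.pi) * Real.exp s := by
      rw [Real.exp_neg]
      field_simp
    rw [h2, hfrank, Real.mul_rpow (by positivity) (Real.exp_nonneg s), ← Real.exp_mul]
    have hmerge : Real.exp (σ.re/2*s - Real.exp s) * Real.exp (s*((n:ℝ)/2))
        = Real.exp ((σ.re/2 + (n:ℝ)/2)*s - Real.exp s) := by
      rw [← Real.exp_add]
      congr 1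
      ring
    rw [mul_comm ((4*Real.pi)^((n:ℝ)/2)) (Real.exp (s*((n:ℝ)/2))), ← mul_assoc, hmerge,
      mul_comm]
  -- product integrability
  have hFint : Integrable (Function.uncurry f) ((volume : Measure V).prod volume) := by
    rw [integrable_prod_iff' hcont.aestronglyMeasurable]
    refine ⟨Filter.Eventually.of_forall fun s => hgauss_int s, ?_⟩
    have h3 := (H4 one_pos hβ).const_mul ((4*Real.pi)^((n:ℝ)/2))
    refine h3.congr (Filter.Eventually.of_forall fun s => ?_)
    simp only [Function.uncurry_apply_pair]
    rw [hnormint s, one_mul]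
  -- Part 1
  have hK1 : Integrable (fun x : V => Ktilde (-σ/2) ‖x‖) := by
    have h1 : Integrable (fun x : V => ∫ s, f x s) := hFint.integral_prod_left
    refine (h1.const_mul (1/2 : ℂ)).congr ?_
    filter_upwards [hae] with x hx
    exact (hrep x hx).symm
  refine ⟨hK1, (1/2 : ℂ) * ((4*Real.pi : ℝ) : ℂ)^((n:ℂ)/2) * Complex.Gamma ((σ + (n:ℂ))/2),
    ?_, ?_⟩
  · refine mul_ne_zero (mul_ne_zero (by norm_num) ?_) (Complex.Gamma_ne_zero_of_re_pos hwre)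
    intro h
    rw [Complex.cpow_eq_zero_iff] at h
    have : ((4*Real.pi : ℝ) : ℂ) ≠ 0 := by
      rw [Complex.ofReal_ne_zero]
      positivity
    exact this h.1
  · intro ξ
    set g : V → ℝ → ℂ := fun x s => Complex.exp (-I * ((inner ℝ ξ x : ℝ) : ℂ)) * f x s with hg
    have hGint : Integrable (Function.uncurry g) ((volume : Measure V).prod volume) := by
      have hm : AEStronglyMeasurable (fun p : V × ℝ =>
          Complex.exp (-I * ((inner ℝ ξ p.1 : ℝ) : ℂ))) ((volume : Measure V).prod volume) := by
        apply Continuous.aestronglyMeasurable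
        apply Complex.continuous_exp.comp
        apply Continuous.mul continuous_const
        apply Complex.continuous_ofReal.comp
        exact (continuous_const.inner (continuous_fst)).comp continuous_id
      refine (hFint.bdd_mul hm (c := 1) (Filter.Eventually.of_forall fun p => ?_)).congr ?_
      · rw [Complex.norm_exp]
        simp
      · exact Filter.Eventually.of_forall fun p => rfl
    -- per-s Gaussian integral
    have hXint : ∀ s : ℝ, (∫ x : V, g x s) = ((4*Real.pi : ℝ) : ℂ)^((n:ℂ)/2) *
        ((Real.exp (-((1+‖ξ‖^2) * Real.exp s)) : ℝ) : ℂ) *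
        Complex.exp ((σ + (n:ℂ))/2 * s) := by
      intro s
      have key := GaussianFourier.integral_cexp_neg_mul_sq_norm_add (V := V)
        (hbre s) (-I) ξ
      have h1 : ∀ x : V, g x s = ((Real.exp (-(Real.exp s)) : ℝ) : ℂ) *
          Complex.exp (σ/2 * s) *
          Complex.exp (-((Real.exp (-s)/4 : ℝ) : ℂ) * (‖x‖ : ℂ)^2
            + (-I) * ((inner ℝ ξ x : ℝ) : ℂ)) := by
        intro x
        simp only [hg, hf, Complex.ofReal_exp]
        rw [← Complex.exp_add, ← Complex.exp_add, ← Complex.exp_add, ← Complex.exp_add]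
        congr 1
        push_cast
        ring
      rw [integral_congr_ae (Filter.Eventually.of_forall h1), integral_const_mul, key, hfrank]
      -- simplify (π / b)^(n/2)
      have hpib : (Real.pi : ℂ) / ((Real.exp (-s)/4 : ℝ) : ℂ)
          = (((4*Real.pi) * Real.exp s : ℝ) : ℂ) := by
        rw [← Complex.ofReal_div]
        congr 1
        rw [Real.exp_neg]
        field_simp
      have hpow : ((((4*Real.pi) * Real.exp s : ℝ)) : ℂ) ^ ((n:ℂ)/2)
          = ((4*Real.pi : ℝ) : ℂ)^((n:ℂ)/2) * Complex.exp ((n:ℂ)/2 * s) := by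
        rw [Complex.ofReal_mul, mul_cpow_ofReal_nonneg (by positivity) (Real.exp_nonneg s),
          Complex.ofReal_exp, cexp_real_cpow]
      have harg : (-I)^2 * ((‖ξ‖ : ℂ))^2 / (4 * ((Real.exp (-s)/4 : ℝ) : ℂ))
          = ((-(‖ξ‖^2 * Real.exp s) : ℝ) : ℂ) := by
        have h4b : (4 : ℂ) * ((Real.exp (-s)/4 : ℝ) : ℂ) = ((Real.exp (-s) : ℝ) : ℂ) := by
          push_cast
          ring
        rw [neg_sq, Complex.I_sq, h4b]
        rw [show (-1 : ℂ) * ((‖ξ‖ : ℂ))^2 = ((-(‖ξ‖^2) : ℝ) : ℂ) by push_cast; ring,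
          ← Complex.ofReal_div]
        congr 1
        rw [Real.exp_neg]
        field_simp
      rw [hpib, hpow, harg]
      rw [show Complex.exp (((-(‖ξ‖^2 * Real.exp s) : ℝ)) : ℂ)
        = ((Real.exp (-(‖ξ‖^2 * Real.exp s)) : ℝ) : ℂ) from (Complex.ofReal_exp _).symm]
      -- now pure algebra with exponentials
      rw [show ((Real.exp (-((1+‖ξ‖^2) * Real.exp s)) : ℝ) : ℂ)
          = ((Real.exp (-(Real.exp s)) : ℝ) : ℂ) *
            ((Real.exp (-(‖ξ‖^2 * Real.exp s)) : ℝ) : ℂ) by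
        rw [← Complex.ofReal_mul, ← Real.exp_add]
        congr 2
        ring]
      rw [show Complex.exp ((σ + (n:ℂ))/2 * s) = Complex.exp (σ/2 * s) *
          Complex.exp ((n:ℂ)/2 * s) by
        rw [← Complex.exp_add]
        congr 1
        ring]
      ring
    -- assemble
    have hstep1 : (∫ x : V, Complex.exp (-I * ((inner ℝ ξ x : ℝ) : ℂ)) * Ktilde (-σ/2) ‖x‖)
        = ∫ x : V, (1/2 : ℂ) * ∫ s : ℝ, g x s := by
      refine integral_congr_ae ?_
      filter_upwards [hae] with x hx
      rw [hrep x hx, hg]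
      simp only
      rw [integral_const_mul]
      ring
    rw [show Ktilde (-σ / 2) = Ktilde (-σ/2) from rfl] at *
    rw [hstep1, integral_const_mul, integral_integral_swap hGint,
      integral_congr_ae (Filter.Eventually.of_forall fun s => hXint s)]
    have : ∫ s : ℝ, ((4*Real.pi : ℝ) : ℂ)^((n:ℂ)/2) *
        ((Real.exp (-((1+‖ξ‖^2) * Real.exp s)) : ℝ) : ℂ) *
        Complex.exp ((σ + (n:ℂ))/2 * s)
        = ((4*Real.pi : ℝ) : ℂ)^((n:ℂ)/2) * (((1+‖ξ‖^2 : ℝ)) : ℂ) ^ (-((σ + (n:ℂ))/2)) *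
          Complex.Gamma ((σ + (n:ℂ))/2) := by
      have hM := M3 (show (0:ℝ) < 1 + ‖ξ‖^2 by positivity) (w := (σ + (n:ℂ))/2) hwre
      have hpt : ∀ s : ℝ, ((4*Real.pi : ℝ) : ℂ)^((n:ℂ)/2) *
          ((Real.exp (-((1+‖ξ‖^2) * Real.exp s)) : ℝ) : ℂ) *
          Complex.exp ((σ + (n:ℂ))/2 * s)
          = ((4*Real.pi : ℝ) : ℂ)^((n:ℂ)/2) *
            (((Real.exp (-((1+‖ξ‖^2) * Real.exp s)) : ℝ) : ℂ) *
            Complex.exp ((σ + (n:ℂ))/2 * s)) := fun s => by ring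
      rw [integral_congr_ae (Filter.Eventually.of_forall hpt), integral_const_mul, hM,
        mul_assoc]
    rw [this]
    rw [show -(σ + (n:ℂ))/2 = -((σ + (n:ℂ))/2) from neg_div _ _]
    ring
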